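/- Asymptotic value of θ for a backward Euler fine grid: let m ≥ 1, let f : ℝ → ℝ be continuously differentiable, and let u_0 ∈ ℝ satisfy f(u_0) ≠ 0 and f′(u_0) ≠ 0. Suppose that for each sufficiently small h > 0 there are points u_1(h), …, u_m(h) satisfying the backward Euler recursion u_{i+1}(h) = u_i(h) + h·f(u_{i+1}(h)) (with u_0(h) = u_0), and that u_i(h) → u_0 as h → 0⁺ for each 1 ≤ i ≤ m. When f(u_m(h)) ≠ f(u_0), define θ(h) = (f(u_m(h)) − (1/m)∑_{i=1}^{m} f(u_i(h))) / (f(u_m(h)) − f(u_0)). Then there exists h_0 > 0 such that θ(h) is defined for all 0 < h < h_0, and θ(h) → (m−1)/(2m) as h → 0⁺. -/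

import Mathlib

open Filter Set

private lemma gauss_aux : ∀ m : ℕ, ∑ i ∈ Finset.Icc 1 m, ((m:ℝ) - (i:ℝ)) = m * (m - 1) / 2 := by
  intro m
  induction m with
  | zero => simp
  | succ n ih =>
    rw [Finset.sum_Icc_succ_top (by omega)]
    have : ∑ i ∈ Finset.Icc 1 n, (((n:ℕ)+1:ℝ) - (i:ℝ))
        = ∑ i ∈ Finset.Icc 1 n, (((n:ℝ) - (i:ℝ)) + 1) := by
      apply Finset.sum_congr rfl; intro i _; ring
    push_cast
    rw [this, Finset.sum_add_distrib, ih, Finset.sum_const, Nat.card_Icc]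
    simp
    ring

/-- Asymptotic value of θ for a backward Euler fine grid: suppose `f` is `C¹` with
`f(u_0) ≠ 0` and `f'(u_0) ≠ 0`, and suppose `u_1(h), …, u_m(h)` satisfy the backward Euler
recursion `u_{i+1}(h) = u_i(h) + h f(u_{i+1}(h))` for all sufficiently small `h > 0`, with
`u_i(h) → u_0` as `h → 0⁺` for `1 ≤ i ≤ m`. Then
`θ(h) = (f(u_m(h)) - (1/m) ∑_{i=1}^{m} f(u_i(h))) / (f(u_m(h)) - f(u_0))`
is defined for all sufficiently small `h > 0` and `θ(h) → (m-1)/(2m)` as `h → 0⁺`. -/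
theorem stmt14 (m : ℕ) (hm : 1 ≤ m) (f : ℝ → ℝ) (hf : ContDiff ℝ 1 f)
    (u0 : ℝ) (hf0 : f u0 ≠ 0) (hf'0 : deriv f u0 ≠ 0)
    (u : ℝ → ℕ → ℝ)
    (hu0 : ∀ h : ℝ, u h 0 = u0)
    (hrec : ∃ h1 > (0 : ℝ), ∀ h : ℝ, 0 < h → h < h1 →
      ∀ i < m, u h (i + 1) = u h i + h * f (u h (i + 1)))
    (hconv : ∀ i : ℕ, 1 ≤ i → i ≤ m →
      Filter.Tendsto (fun h : ℝ => u h i) (nhdsWithin 0 (Set.Ioi 0)) (nhds u0)) :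
    ∃ h0 > (0 : ℝ),
      (∀ h : ℝ, 0 < h → h < h0 → f (u h m) ≠ f u0) ∧
      Filter.Tendsto
        (fun h : ℝ =>
          (f (u h m) - (1 / (m : ℝ)) * ∑ i ∈ Finset.Icc 1 m, f (u h i))
            / (f (u h m) - f u0))
        (nhdsWithin 0 (Set.Ioi 0))
        (nhds (((m : ℝ) - 1) / (2 * (m : ℝ)))) := by
  obtain ⟨h1, h1pos, hrec⟩ := hrec
  set c := f u0 with hc
  set d := deriv f u0 with hd
  have hmR : (m : ℝ) ≠ 0 := Nat.cast_ne_zero.mpr (by omega)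
  -- the slope function
  set φ : ℝ → ℝ := fun x => if x = u0 then d else (f x - f u0) / (x - u0) with hφdef
  have hA : ∀ x, f x - f u0 = φ x * (x - u0) := by
    intro x
    by_cases hx : x = u0
    · simp [hφdef, hx]
    · have : x - u0 ≠ 0 := sub_ne_zero.mpr hx
      simp only [hφdef, if_neg hx]
      field_simp
  have hφcont : Tendsto φ (nhds u0) (nhds d) := by
    have hder : HasDerivAt f d u0 := ((hf.differentiable one_ne_zero) u0).hasDerivAt
    have hs := hasDerivAt_iff_tendsto_slope.mp hder
    rw [← nhdsNE_sup_pure u0, tendsto_sup]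
    constructor
    · refine hs.congr' ?_
      filter_upwards [self_mem_nhdsWithin] with x hx
      have hx' : x ≠ u0 := hx
      simp only [hφdef, if_neg hx', slope_def_field]
    · have : φ u0 = d := by simp [hφdef]
      simpa [this] using tendsto_pure_nhds φ u0
  -- expansion via the recursion
  have hexp : ∀ h : ℝ, 0 < h → h < h1 → ∀ i ≤ m,
      u h i = u0 + h * ∑ j ∈ Finset.Icc 1 i, f (u h j) := by
    intro h hp hlt i
    induction i with
    | zero => intro _; simp [hu0]
    | succ i ih =>
      intro hle
      have hi : i < m := by omega
      rw [hrec h hp hlt i hi, ih (by omega),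
        Finset.sum_Icc_succ_top (by omega : 1 ≤ i + 1)]
      ring
  -- convergence of the basic pieces
  have hF : ∀ i, 1 ≤ i → i ≤ m →
      Tendsto (fun h : ℝ => f (u h i)) (nhdsWithin 0 (Set.Ioi 0)) (nhds c) :=
    fun i h1i him => (hf.continuous.continuousAt.tendsto).comp (hconv i h1i him)
  have hS : ∀ i, i ≤ m →
      Tendsto (fun h : ℝ => ∑ j ∈ Finset.Icc 1 i, f (u h j)) (nhdsWithin 0 (Set.Ioi 0))
        (nhds ((i : ℝ) * c)) := by
    intro i him
    have := tendsto_finset_sum (Finset.Icc 1 i) (fun j hj =>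
      hF j (Finset.mem_Icc.mp hj).1 (le_trans (Finset.mem_Icc.mp hj).2 him))
    have hcard : ∑ _j ∈ Finset.Icc 1 i, c = (i : ℝ) * c := by
      rw [Finset.sum_const, Nat.card_Icc]
      simp [mul_comm]
    rwa [hcard] at this
  have hΦ : ∀ i, 1 ≤ i → i ≤ m →
      Tendsto (fun h : ℝ => φ (u h i)) (nhdsWithin 0 (Set.Ioi 0)) (nhds d) :=
    fun i a b => hφcont.comp (hconv i a b)
  -- abbreviations
  set S : ℕ → ℝ → ℝ := fun i h => ∑ j ∈ Finset.Icc 1 i, f (u h j) with hSdef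
  -- the denominator piece tends to a nonzero limit
  have hDm : Tendsto (fun h : ℝ => φ (u h m) * S m h) (nhdsWithin 0 (Set.Ioi 0))
      (nhds (d * ((m : ℝ) * c))) := (hΦ m hm le_rfl).mul (hS m le_rfl)
  have hdmc : d * ((m : ℝ) * c) ≠ 0 := by
    apply mul_ne_zero hf'0
    exact mul_ne_zero hmR hf0
  have hev_ne : ∀ᶠ h in nhdsWithin (0:ℝ) (Set.Ioi 0), φ (u h m) * S m h ≠ 0 :=
    hDm.eventually_ne hdmc
  have hev_Ioo : ∀ᶠ h in nhdsWithin (0:ℝ) (Set.Ioi 0), h ∈ Set.Ioo (0:ℝ) h1 :=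
    Ioo_mem_nhdsGT_of_mem ⟨le_refl 0, h1pos⟩
  -- key pointwise identity for small positive h
  have hkey : ∀ h : ℝ, 0 < h → h < h1 →
      (f (u h m) - f u0 = h * (φ (u h m) * S m h)) ∧
      (f (u h m) - (1 / (m : ℝ)) * ∑ i ∈ Finset.Icc 1 m, f (u h i)
        = h * ((1 / (m : ℝ)) *
            ∑ i ∈ Finset.Icc 1 m, (φ (u h m) * S m h - φ (u h i) * S i h))) := by
    intro h hp hlt
    have hfi : ∀ i, 1 ≤ i → i ≤ m → f (u h i) = f u0 + φ (u h i) * (h * S i h) := by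
      intro i h1i him
      have := hA (u h i)
      have hui : u h i - u0 = h * S i h := by
        rw [hexp h hp hlt i him]; ring
      rw [hui] at this
      linarith
    constructor
    · have := hfi m hm le_rfl
      rw [this]; ring
    · have hsum : ∑ i ∈ Finset.Icc 1 m, f (u h i)
          = ∑ i ∈ Finset.Icc 1 m, (f u0 + φ (u h i) * (h * S i h)) := by
        apply Finset.sum_congr rfl
        intro i hi
        exact hfi i (Finset.mem_Icc.mp hi).1 (Finset.mem_Icc.mp hi).2
      have e1 : ∑ i ∈ Finset.Icc 1 m, φ (u h i) * (h * S i h)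
          = h * ∑ i ∈ Finset.Icc 1 m, φ (u h i) * S i h := by
        rw [Finset.mul_sum]
        exact Finset.sum_congr rfl fun i _ => by ring
      rw [hsum, Finset.sum_add_distrib, Finset.sum_const, Nat.card_Icc, e1,
        hfi m hm le_rfl, Finset.sum_sub_distrib, Finset.sum_const, Nat.card_Icc]
      simp only [Nat.add_sub_cancel, nsmul_eq_mul]
      field_simp
      ring
    -- end hkey
  -- the h-free quotient
  set G : ℝ → ℝ := fun h =>
    ((1 / (m : ℝ)) * ∑ i ∈ Finset.Icc 1 m, (φ (u h m) * S m h - φ (u h i) * S i h))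
      / (φ (u h m) * S m h) with hGdef
  have hGlim : Tendsto G (nhdsWithin 0 (Set.Ioi 0))
      (nhds (((m : ℝ) - 1) / (2 * (m : ℝ)))) := by
    have hnum : Tendsto
        (fun h : ℝ => (1 / (m : ℝ)) *
          ∑ i ∈ Finset.Icc 1 m, (φ (u h m) * S m h - φ (u h i) * S i h))
        (nhdsWithin 0 (Set.Ioi 0))
        (nhds ((1 / (m : ℝ)) *
          ∑ i ∈ Finset.Icc 1 m, (d * ((m:ℝ) * c) - d * ((i:ℝ) * c)))) := by
      apply Tendsto.const_mul
      apply tendsto_finset_sum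
      intro i hi
      obtain ⟨hi1, hi2⟩ := Finset.mem_Icc.mp hi
      exact hDm.sub ((hΦ i hi1 hi2).mul (hS i hi2))
    have := hnum.div hDm hdmc
    have hval : ((1 / (m : ℝ)) *
        ∑ i ∈ Finset.Icc 1 m, (d * ((m:ℝ) * c) - d * ((i:ℝ) * c))) / (d * ((m:ℝ) * c))
        = ((m : ℝ) - 1) / (2 * (m : ℝ)) := by
      have hsum : ∑ i ∈ Finset.Icc 1 m, (d * ((m:ℝ) * c) - d * ((i:ℝ) * c))
          = d * c * ((m:ℝ) * ((m:ℝ) - 1) / 2) := by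
        rw [Finset.sum_congr rfl (fun i _ => by ring :
          ∀ i ∈ Finset.Icc 1 m, d * ((m:ℝ) * c) - d * ((i:ℝ) * c)
            = d * c * ((m:ℝ) - (i:ℝ)))]
        rw [← Finset.mul_sum, gauss_aux]
      rw [hsum]
      field_simp
    rwa [hval] at this
  -- eventual equality of θ with G
  have heqev : ∀ᶠ h in nhdsWithin (0:ℝ) (Set.Ioi 0),
      (f (u h m) - (1 / (m : ℝ)) * ∑ i ∈ Finset.Icc 1 m, f (u h i))
        / (f (u h m) - f u0) = G h := by
    filter_upwards [hev_Ioo] with h hh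
    obtain ⟨hp, hlt⟩ := hh
    obtain ⟨k1, k2⟩ := hkey h hp hlt
    rw [k1, k2, hGdef]
    exact mul_div_mul_left _ _ (ne_of_gt hp)
  have htends : Tendsto
      (fun h : ℝ =>
        (f (u h m) - (1 / (m : ℝ)) * ∑ i ∈ Finset.Icc 1 m, f (u h i))
          / (f (u h m) - f u0))
      (nhdsWithin 0 (Set.Ioi 0))
      (nhds (((m : ℝ) - 1) / (2 * (m : ℝ)))) :=
    hGlim.congr' (heqev.mono fun h e => e.symm)
  -- extract h0 for the nonvanishing of the denominator
  have hev_fne : ∀ᶠ h in nhdsWithin (0:ℝ) (Set.Ioi 0), f (u h m) ≠ f u0 := by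
    filter_upwards [hev_ne, hev_Ioo] with h hne hh
    obtain ⟨hp, hlt⟩ := hh
    obtain ⟨k1, _⟩ := hkey h hp hlt
    intro hcontra
    rw [hcontra, sub_self] at k1
    exact hne (by
      have := k1.symm
      rcases mul_eq_zero.mp this with h0 | h0
      · exact absurd h0 (ne_of_gt hp)
      · exact h0)
  obtain ⟨h0, h0pos, hsub⟩ := mem_nhdsGT_iff_exists_Ioo_subset.mp hev_fne
  exact ⟨h0, h0pos, fun h hp hlt => hsub ⟨hp, hlt⟩, htends⟩
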